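/- If a problem is rationalizable (i.e., some strict type-preference profile places μ in the strong core), then for all individuals a, b of the same agent type with μ^E(a) = μ^E(b), we have μ(a) = μ(b). (Equal treatment of equals is necessary for rationalizability.) -/

import Mathlib

/-- Arc of the allocation graph G^big: `(a,b)` is an arc iff `μ a = μE b`. -/
def arcBig {A H : Type*} (μE μ : A → H) (a b : A) : Prop := μ a = μE b

/-- Two agents lie in the same strongly connected component of G^big. -/
def sameSCC {A H : Type*} (μE μ : A → H) (a b : A) : Prop :=
  Relation.ReflTransGen (arcBig μE μ) a b ∧ Relation.ReflTransGen (arcBig μE μ) b a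

/-- For each house type, the number of agents allocated it equals the number endowed with it. -/
def BalancedAlloc {A H : Type*} (μE μ : A → H) : Prop :=
  ∀ h : H, Nat.card {a : A // μ a = h} = Nat.card {a : A // μE a = h}

/-- A directed cycle: a nonempty list of distinct vertices with consecutive arcs,
and an arc from the last vertex back to the first. A single vertex with a
self-loop is a cycle of length 1. -/
def IsCycle {V : Type*} (R : V → V → Prop) (l : List V) : Prop :=
  l ≠ [] ∧ l.Nodup ∧ l.Chain' R ∧ ∀ h : l ≠ [], R (l.getLast h) (l.head h)

/-- A blocking coalition: a nonempty coalition `C` and a reallocation `μ'` of its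
own endowments (as multisets) making every member weakly better off and at least
one member strictly better off, w.r.t. the strict type-preference profile `P`. -/
def Blocking {A H T : Type*} (tp : A → T) (μE μ : A → H)
    (P : T → LinearOrder H) : Prop :=
  ∃ (C : Finset A) (μ' : A → H),
    C.Nonempty ∧
    C.val.map μ' = C.val.map μE ∧
    (∀ a ∈ C, (P (tp a)).le (μ a) (μ' a)) ∧
    (∃ a ∈ C, (P (tp a)).lt (μ a) (μ' a))

/-- The allocation `μ` is rationalizable: some strict type-preference profile places
it in the strong core (no blocking coalition). -/
def Rationalizable {A H T : Type*} (tp : A → T) (μE μ : A → H) : Prop :=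
  ∃ P : T → LinearOrder H, ¬ Blocking tp μE μ P

/-- equal treatment of equals is necessary for rationalizability:
same-type agents with equal endowments must receive the same house type. -/
theorem keyBlock {A H T : Type*} [Fintype A] (tp : A → T) (μE μ : A → H)
    (σ : Equiv.Perm A) (hσ : ∀ x, μE (σ x) = μ x)
    (P : T → LinearOrder H) (a b : A)
    (he : μE a = μE b) (hlt : (P (tp b)).lt (μ b) (μ a)) :
    Blocking tp μE μ P := by
  classical
  have hab : a ≠ b := by
    intro h; subst h
    letI := P (tp a)
    exact lt_irrefl _ hlt
  have hex : ∃ n, 1 ≤ n ∧ ((σ ^ n) a = a ∨ (σ ^ n) a = b) := by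
    refine ⟨orderOf σ, orderOf_pos σ, Or.inl ?_⟩
    rw [pow_orderOf_eq_one σ]; rfl
  set k := Nat.find hex with hkdef
  obtain ⟨hk1, hk2⟩ : 1 ≤ k ∧ ((σ ^ k) a = a ∨ (σ ^ k) a = b) := Nat.find_spec hex
  have hmin : ∀ m, 1 ≤ m → m < k → (σ ^ m) a ≠ a ∧ (σ ^ m) a ≠ b := by
    intro m hm1 hmk
    have := Nat.find_min hex hmk
    push_neg at this
    exact this hm1
  -- injectivity of powers up to (but excluding) k
  have hinj : ∀ i j : ℕ, i ≤ j → j < k → (σ ^ i) a = (σ ^ j) a → i = j := by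
    intro i j hij hjk hEq
    by_contra hne
    have hlt' : i < j := lt_of_le_of_ne hij hne
    have h' : i + (j - i) = j := by omega
    have hsplit : (σ ^ i) ((σ ^ (j - i)) a) = (σ ^ j) a := by
      rw [← Equiv.Perm.mul_apply, ← pow_add, h']
    have hsplit := hsplit.symm
    have hret : (σ ^ (j - i)) a = a := by
      apply (σ ^ i).injective
      rw [← hsplit, hEq]
    exact (hmin (j - i) (by omega) (by omega)).1 hret
  -- the coalition list
  set L : List A := (List.range (k - 1)).map (fun i => (σ ^ (i + 1)) a) with hLdef
  have hbL : b ∉ L := by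
    intro hb
    rw [hLdef, List.mem_map] at hb
    obtain ⟨i, hi, hib⟩ := hb
    rw [List.mem_range] at hi
    exact (hmin (i + 1) (by omega) (by omega)).2 hib
  have hLnd : L.Nodup := by
    rw [hLdef]
    refine List.Nodup.map_on ?_ List.nodup_range
    intro i hi j hj hEq
    rw [List.mem_range] at hi hj
    rcases le_total i j with h | h
    · have := hinj (i + 1) (j + 1) (by omega) (by omega) hEq
      omega
    · have := hinj (j + 1) (i + 1) (by omega) (by omega) hEq.symm
      omega
  have hCnd : (b :: L).Nodup := List.nodup_cons.mpr ⟨hbL, hLnd⟩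
  set C : Finset A := ⟨(b :: L : List A), by exact_mod_cast hCnd⟩ with hCdef
  set μ' : A → H := Function.update μ b (μ a) with hμ'def
  have hμ'b : μ' b = μ a := Function.update_self _ _ _
  have hμ'x : ∀ x, x ≠ b → μ' x = μ x := fun x hx => Function.update_of_ne hx _ _
  refine ⟨C, μ', ⟨b, List.mem_cons_self⟩, ?_, ?_, ⟨b, List.mem_cons_self, ?_⟩⟩
  · -- multiset equality
    show ((b :: L : List A) : Multiset A).map μ' = ((b :: L : List A) : Multiset A).map μE
    rw [Multiset.map_coe, Multiset.map_coe, Multiset.coe_eq_coe]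
    -- compute both maps
    have hmapμ' : (b :: L).map μ' = μ a :: (List.range (k-1)).map (fun i => μE ((σ ^ (i+2)) a)) := by
      rw [List.map_cons, hμ'b, hLdef, List.map_map]
      congr 1
      apply List.map_congr_left
      intro i hi
      simp only [Function.comp_apply]
      rw [List.mem_range] at hi
      have hne : (σ ^ (i + 1)) a ≠ b := (hmin (i+1) (by omega) (by omega)).2
      show μ' ((σ ^ (i+1)) a) = μE ((σ ^ (i+2)) a)
      rw [hμ'x _ hne, ← hσ ((σ ^ (i+1)) a), ← Equiv.Perm.mul_apply, ← pow_succ']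
    have hmapμE : (b :: L).map μE = μE ((σ ^ k) a) :: (List.range (k-1)).map (fun i => μE ((σ ^ (i+1)) a)) := by
      rw [List.map_cons, hLdef, List.map_map]
      congr 1
      rcases hk2 with h | h <;> rw [h, ← he]
    rw [hmapμ', hmapμE]
    have hμa : μ a = μE ((σ ^ 1) a) := by rw [pow_one, hσ]
    rw [hμa]
    -- both are permutations of (range k).map (fun i => μE ((σ^(i+1)) a))
    set g : ℕ → H := fun i => μE ((σ ^ (i+1)) a) with hgdef
    have hk' : μE ((σ ^ k) a) = g (k - 1) := by
      have : k - 1 + 1 = k := by omega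
      show μE ((σ ^ k) a) = μE ((σ ^ (k - 1 + 1)) a)
      rw [this]
    rw [hk']
    show List.Perm (g 0 :: (List.range (k-1)).map (fun i => g (i+1))) (g (k-1) :: (List.range (k-1)).map g)
    have h1 : g 0 :: (List.range (k-1)).map (fun i => g (i+1)) = (List.range k).map g := by
      have : k = (k-1) + 1 := by omega
      rw [this, List.range_succ_eq_map, List.map_cons, List.map_map]
      rfl
    have h2 : (List.range k).map g = (List.range (k-1)).map g ++ [g (k-1)] := by
      have : k = (k-1) + 1 := by omega
      rw [this, List.range_succ, List.map_append]
      rfl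
    rw [h1, h2]
    exact List.perm_append_singleton _ _
  · -- weak improvement
    intro x hx
    rcases List.mem_cons.mp hx with h | h
    · subst h
      letI := P (tp x)
      exact le_of_lt (by rw [hμ'b]; exact hlt)
    · have hxb : x ≠ b := fun hh => hbL (hh ▸ h)
      rw [hμ'x x hxb]
      letI := P (tp x)
      exact le_refl _
  · rw [hμ'b]; exact hlt


theorem existsPermAux {A H : Type*} [Fintype A] (μE μ : A → H)
    (hbal : BalancedAlloc μE μ) : ∃ σ : Equiv.Perm A, ∀ x, μE (σ x) = μ x := by
  classical
  have e : ∀ h : H, {a : A // μ a = h} ≃ {a : A // μE a = h} := fun h =>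
    Fintype.equivOfCardEq (by
      have := hbal h
      simpa [Nat.card_eq_fintype_card] using this)
  refine ⟨(Equiv.sigmaFiberEquiv μ).symm.trans
    ((Equiv.sigmaCongrRight e).trans (Equiv.sigmaFiberEquiv μE)), ?_⟩
  intro x
  exact (e (μ x) ⟨x, rfl⟩).2


theorem stmt6 {A H T : Type*} [Fintype A] [Fintype H] (tp : A → T)
    (μE μ : A → H) (hbal : BalancedAlloc μE μ)
    (hrat : Rationalizable tp μE μ) :
    ∀ a b : A, tp a = tp b → μE a = μE b → μ a = μ b := by
  intro a b ht he
  by_contra hne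
  obtain ⟨P, hnb⟩ := hrat
  obtain ⟨σ, hσ⟩ := existsPermAux μE μ hbal
  letI := P (tp a)
  rcases lt_trichotomy (μ a) (μ b) with h | h | h
  · exact hnb (keyBlock tp μE μ σ hσ P b a he.symm h)
  · exact hne h
  · exact hnb (keyBlock tp μE μ σ hσ P a b he (by rw [← ht]; exact h))
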